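/- Let N ≥ 1 and let F ∈ ℚ[x₁,…,x_N] be a symmetric homogeneous polynomial of odd degree d ≥ 1. Then there exist symmetric polynomials R_j ∈ ℚ[x₁,…,x_N], indexed by the odd integers j with 1 ≤ j ≤ min(d,N), such that F = Σ_{j odd, 1 ≤ j ≤ min(d,N)} p_j · R_j, where p_j = x₁^j + ⋯ + x_N^j. -/

import Mathlib

open MvPolynomial

section Aux

variable (N : ℕ)

/-- Symmetrization operator: average over all permutations. -/
noncomputable def symAvg (Q : MvPolynomial (Fin N) ℚ) : MvPolynomial (Fin N) ℚ :=
  ((Nat.factorial N : ℚ))⁻¹ • ∑ e : Equiv.Perm (Fin N), rename e Q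

lemma symAvg_isSymmetric (Q : MvPolynomial (Fin N) ℚ) : (symAvg N Q).IsSymmetric := by
  intro τ
  unfold symAvg
  rw [map_smul, map_sum]
  congr 1
  have := Equiv.sum_comp (Equiv.mulLeft τ) (fun e : Equiv.Perm (Fin N) => rename e Q)
  simp only [Equiv.coe_mulLeft] at this
  rw [← this]
  refine Finset.sum_congr rfl fun e _ => ?_
  rw [rename_rename]
  rfl

lemma symAvg_of_isSymmetric {F : MvPolynomial (Fin N) ℚ} (h : F.IsSymmetric) :
    symAvg N F = F := by
  unfold symAvg
  simp only [h _]
  rw [Finset.sum_const, Finset.card_univ, Fintype.card_perm, Fintype.card_fin,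
    ← Nat.cast_smul_eq_nsmul ℚ, smul_smul,
    inv_mul_cancel₀ (by exact_mod_cast Nat.factorial_ne_zero N), one_smul]

lemma symAvg_mul (p Q : MvPolynomial (Fin N) ℚ) (hp : p.IsSymmetric) :
    symAvg N (p * Q) = p * symAvg N Q := by
  unfold symAvg
  simp only [map_mul, hp _]
  rw [← Finset.mul_sum, mul_smul_comm]

lemma symAvg_sum {ι : Type*} (s : Finset ι) (f : ι → MvPolynomial (Fin N) ℚ) :
    symAvg N (∑ j ∈ s, f j) = ∑ j ∈ s, symAvg N (f j) := by
  unfold symAvg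
  simp_rw [map_sum]
  rw [Finset.sum_comm, Finset.smul_sum]

/-- Adjoin of power sums `p_1, …, p_N`. -/
noncomputable def psumAdjoin : Subalgebra ℚ (MvPolynomial (Fin N) ℚ) :=
  Algebra.adjoin ℚ ((fun j => psum (Fin N) ℚ j) '' Set.Icc 1 N)

lemma esymm_mem_psumAdjoin : ∀ k, k ≤ N → esymm (Fin N) ℚ k ∈ psumAdjoin N := by
  intro k
  induction k using Nat.strong_induction_on with
  | _ k ih =>
  intro hk
  rcases Nat.eq_zero_or_pos k with h0 | h1
  · subst h0; rw [esymm_zero]; exact one_mem _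
  have hC : esymm (Fin N) ℚ k
      = C ((k : ℚ))⁻¹ * ((k : MvPolynomial (Fin N) ℚ) * esymm (Fin N) ℚ k) := by
    rw [← mul_assoc, ← map_natCast (C : ℚ →+* MvPolynomial (Fin N) ℚ) k, ← map_mul,
      inv_mul_cancel₀ (by exact_mod_cast h1.ne'), map_one, one_mul]
  rw [hC, mul_esymm_eq_sum]
  refine mul_mem (by rw [← algebraMap_eq]; exact Subalgebra.algebraMap_mem _ _) ?_
  refine mul_mem (pow_mem (neg_mem (one_mem _)) _) (Subalgebra.sum_mem _ fun a ha => ?_)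
  simp only [Finset.mem_filter, Finset.HasAntidiagonal.mem_antidiagonal] at ha
  refine mul_mem (mul_mem (pow_mem (neg_mem (one_mem _)) _) (ih a.1 ha.2 (le_of_lt
    (lt_of_lt_of_le ha.2 hk)))) ?_
  refine Algebra.subset_adjoin ⟨a.2, ?_, rfl⟩
  constructor
  · omega
  · omega

lemma isSymmetric_mem_psumAdjoin {F : MvPolynomial (Fin N) ℚ} (h : F.IsSymmetric) :
    F ∈ psumAdjoin N := by
  obtain ⟨P, hP⟩ := esymmAlgHom_surjective (σ := Fin N) ℚ (n := N)
    (by simp) ⟨F, (mem_symmetricSubalgebra F).mpr h⟩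
  have hF : F = aeval (fun i : Fin N => esymm (Fin N) ℚ (i + 1)) P := by
    rw [← esymmAlgHom_apply, hP]
  rw [hF]
  have h1 : aeval (fun i : Fin N => esymm (Fin N) ℚ (i + 1)) P ∈
      Algebra.adjoin ℚ (Set.range (fun i : Fin N => esymm (Fin N) ℚ (i + 1))) := by
    rw [Algebra.adjoin_range_eq_range_aeval]
    exact ⟨P, rfl⟩
  refine Algebra.adjoin_le ?_ h1
  rintro _ ⟨i, rfl⟩
  exact esymm_mem_psumAdjoin N (i + 1) i.2

lemma psum_isHomogeneous (j : ℕ) : (psum (Fin N) ℚ j).IsHomogeneous j := by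
  refine MvPolynomial.IsHomogeneous.sum _ _ _ fun i _ => ?_
  simpa using (isHomogeneous_X ℚ i).pow j

/-- The ideal generated by odd power sums up to `min e N`. -/
noncomputable def oddPsumIdeal (e : ℕ) : Ideal (MvPolynomial (Fin N) ℚ) :=
  Ideal.span ((fun j => psum (Fin N) ℚ j) ''
    ↑((Finset.Icc 1 (min e N)).filter (fun j => Odd j)))

lemma oddPsumIdeal_mono {e f : ℕ} (h : e ≤ f) : oddPsumIdeal N e ≤ oddPsumIdeal N f := by
  refine Ideal.span_mono (Set.image_mono ?_)
  intro j hj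
  simp only [Finset.coe_filter, Finset.mem_Icc, Set.mem_setOf_eq] at hj ⊢
  exact ⟨⟨hj.1.1, le_trans hj.1.2 (by omega)⟩, hj.2⟩

lemma closure_homog (x : MvPolynomial (Fin N) ℚ)
    (hx : x ∈ Submonoid.closure ((fun j => psum (Fin N) ℚ j) '' Set.Icc 1 N)) :
    ∃ e, x.IsHomogeneous e ∧ (Odd e → x ∈ oddPsumIdeal N e) := by
  induction hx using Submonoid.closure_induction with
  | mem x h =>
    obtain ⟨j, hj, rfl⟩ := h
    refine ⟨j, psum_isHomogeneous N j, fun hodd => Ideal.subset_span ⟨j, ?_, rfl⟩⟩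
    simp only [Finset.coe_filter, Finset.mem_Icc, Set.mem_setOf_eq]
    exact ⟨⟨hj.1, le_min le_rfl hj.2⟩, hodd⟩
  | one => exact ⟨0, isHomogeneous_one _ _, fun h => by simp at h⟩
  | mul x y hx hy ihx ihy =>
    obtain ⟨e, he, hxe⟩ := ihx
    obtain ⟨f, hf, hyf⟩ := ihy
    refine ⟨e + f, he.mul hf, fun hodd => ?_⟩
    rcases Nat.even_or_odd e with heven | hoddE
    · have hoddf : Odd f := by
        rcases Nat.even_or_odd f with hf2 | hf2
        · exact absurd (heven.add hf2) (Nat.not_even_iff_odd.mpr hodd)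
        · exact hf2
      exact oddPsumIdeal_mono N (Nat.le_add_left f e) (Ideal.mul_mem_left _ x (hyf hoddf))
    · exact oddPsumIdeal_mono N (Nat.le_add_right e f) (Ideal.mul_mem_right y _ (hxe hoddE))

end Aux

/-- Every symmetric homogeneous polynomial of odd degree `d` in `N` variables can be written as
`Σ p_j · R_j`, the sum ranging over odd `j` with `1 ≤ j ≤ min d N`, where the `R_j` are
symmetric polynomials and `p_j = x₁^j + ⋯ + x_N^j`. -/
theorem symmetric_odd_form_odd_powersum_decomposition
    (N : ℕ) (hN : 1 ≤ N) (d : ℕ) (hd : Odd d) (hd1 : 1 ≤ d)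
    (F : MvPolynomial (Fin N) ℚ)
    (hsym : F.IsSymmetric) (hhom : F.IsHomogeneous d) :
    ∃ R : ℕ → MvPolynomial (Fin N) ℚ,
      (∀ j, (R j).IsSymmetric) ∧
      F = ∑ j ∈ (Finset.Icc 1 (min d N)).filter (fun j => Odd j),
            (∑ i, X i ^ j) * R j := by
  classical
  -- F is in the ideal generated by the odd power sums.
  have hFI : F ∈ oddPsumIdeal N d := by
    have hFA : F ∈ psumAdjoin N := isSymmetric_mem_psumAdjoin N hsym
    rw [psumAdjoin, ← Subalgebra.mem_toSubmodule, Algebra.adjoin_eq_span] at hFA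
    have key : homogeneousComponent d F ∈ oddPsumIdeal N d := by
      clear hsym hhom
      induction hFA using Submodule.span_induction with
      | mem x h =>
        obtain ⟨e, he, hxe⟩ := closure_homog N x h
        rw [homogeneousComponent_of_mem ((mem_homogeneousSubmodule _ _).mpr he)]
        split_ifs with hde
        · subst hde; exact hxe hd
        · exact zero_mem _
      | zero => rw [map_zero]; exact zero_mem _
      | add x y hx hy ihx ihy => rw [map_add]; exact add_mem ihx ihy
      | smul q x hx ihx =>
        rw [map_smul, smul_eq_C_mul]
        exact Ideal.mul_mem_left _ _ ihx
    rwa [homogeneousComponent_of_mem ((mem_homogeneousSubmodule _ _).mpr hhom),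
      if_pos rfl] at key
  -- Extract coefficients.
  set t := (Finset.Icc 1 (min d N)).filter (fun j => Odd j) with ht
  have himg : (fun j => psum (Fin N) ℚ j) '' ↑t
      = Set.range (fun j : {j // j ∈ t} => psum (Fin N) ℚ j.1) := by
    rw [Set.image_eq_range]; rfl
  rw [oddPsumIdeal, himg] at hFI
  obtain ⟨c, hc⟩ := (Submodule.mem_span_range_iff_exists_fun _).mp hFI
  -- Symmetrize.
  refine ⟨fun j => symAvg N (if h : j ∈ t then c ⟨j, h⟩ else 0), fun j => symAvg_isSymmetric N _, ?_⟩
  have : F = ∑ j ∈ t.attach, psum (Fin N) ℚ j.1 * symAvg N (c j) := by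
    calc F = symAvg N F := (symAvg_of_isSymmetric N hsym).symm
    _ = symAvg N (∑ j ∈ t.attach, c j • psum (Fin N) ℚ j.1) := by
        rw [← hc]; rfl
    _ = ∑ j ∈ t.attach, psum (Fin N) ℚ j.1 * symAvg N (c j) := by
        rw [symAvg_sum]
        refine Finset.sum_congr rfl fun j _ => ?_
        rw [smul_eq_mul, mul_comm, symAvg_mul _ _ _ (psum_isSymmetric (Fin N) ℚ j.1)]
  rw [this]
  rw [← Finset.sum_attach t (fun j => (∑ i, X i ^ j) * symAvg N (if h : j ∈ t then c ⟨j, h⟩ else 0))]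
  refine Finset.sum_congr rfl fun j _ => ?_
  rw [dif_pos j.2]
  rfl
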